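/- Let T̃_m denote the number of typed search walks of length m, and let t = Σ_{m ≥ 1} T̃_m z^m be the associated formal power series (over the integers, with constant term 0). Then t satisfies the identity 3z·t^3 + (1+z)·t^2 − (1+z)·t + z = 0 in the ring of formal power series. -/

import Mathlib

/-- A search walk: a finite sequence of nonzero integers each at most `1`,
all of whose partial sums are at least `1`, and whose total sum is `1`. -/
def IsSearchWalk (D : List ℤ) : Prop :=
  (∀ d ∈ D, d ≠ 0 ∧ d ≤ 1) ∧
  (∀ k, 1 ≤ k → k ≤ D.length → 1 ≤ (D.take k).sum) ∧
  D.sum = 1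

/-- `Tt m` is the number of typed search walks of length `m`: pairs of a search
walk `D` of length `m` together with an assignment of a label in `{1,2,3,4}`
(here modelled as `Fin 4`) to each entry of `D` that is at most `-2` (the
assignment is recorded as the list of labels of those entries in order). -/
noncomputable def Tt (m : ℕ) : ℕ :=
  Nat.card {p : List ℤ × List (Fin 4) //
    p.1.length = m ∧ IsSearchWalk p.1 ∧
    p.2.length = (p.1.filter fun d => decide (d ≤ -2)).length}
/-- The generating function of the numbers of typed search walks, as a formal
power series over `ℤ` with constant term `0`. -/
noncomputable def t : PowerSeries ℤ :=
  PowerSeries.mk fun m => if m = 0 then 0 else (Tt m : ℤ)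

namespace TSW

def sm : ℤ → Bool := fun d => decide (d ≤ -2)

def IsWalkTo (s : ℤ) (D : List ℤ) : Prop :=
  (∀ d ∈ D, d ≠ 0 ∧ d ≤ 1) ∧
  (∀ k, 1 ≤ k → k ≤ D.length → 1 ≤ (D.take k).sum) ∧
  D.sum = s

def P (s : ℤ) (m : ℕ) (p : List ℤ × List (Fin 4)) : Prop :=
  p.1.length = m ∧ IsWalkTo s p.1 ∧
    p.2.length = (p.1.filter fun d => decide (d ≤ -2)).length

theorem sum_le_length (l : List ℤ) (h : ∀ d ∈ l, d ≤ 1) : l.sum ≤ (l.length : ℤ) := by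
  induction l with
  | nil => simp
  | cons a l ih =>
    have h1 := h a List.mem_cons_self
    have h2 := ih (fun d hd => h d (List.mem_cons_of_mem _ hd))
    simp only [List.sum_cons, List.length_cons]
    push_cast
    omega

theorem take_sum_le (D : List ℤ) (h : ∀ d ∈ D, d ≤ 1) (k : ℕ) :
    (D.take k).sum ≤ (k : ℤ) := by
  have h1 : (D.take k).sum ≤ ((D.take k).length : ℤ) :=
    sum_le_length _ (fun d hd => h d (List.mem_of_mem_take hd))
  have h2 : (D.take k).length ≤ k := by simp [List.length_take]
  omega

theorem IsWalkTo.sum_le {s : ℤ} {D : List ℤ} (h : IsWalkTo s D) : s ≤ (D.length : ℤ) := by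
  have h1 := sum_le_length D (fun d hd => (h.1 d hd).2)
  have h2 := h.2.2
  omega

theorem IsWalkTo.pos {s : ℤ} {D : List ℤ} (h : IsWalkTo s D) (hne : D ≠ []) : 1 ≤ s := by
  have hlen : 1 ≤ D.length := List.length_pos_iff.2 hne
  have := h.2.1 D.length hlen le_rfl
  rwa [List.take_length, h.2.2] at this

theorem isWalkTo_append {a b : ℤ} {A B : List ℤ} (ha : 0 ≤ a)
    (hA : IsWalkTo a A) (hB : IsWalkTo b B) : IsWalkTo (a + b) (A ++ B) := by
  obtain ⟨hA1, hA2, hA3⟩ := hA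
  obtain ⟨hB1, hB2, hB3⟩ := hB
  refine ⟨?_, ?_, by simp [hA3, hB3]⟩
  · intro d hd
    rcases List.mem_append.1 hd with h | h
    · exact hA1 d h
    · exact hB1 d h
  · intro k hk1 hk2
    rcases le_or_gt k A.length with h | h
    · rw [List.take_append_of_le_length h]
      exact hA2 k hk1 h
    · have hk : k = A.length + (k - A.length) := by omega
      rw [hk, List.take_add, List.take_left, List.drop_left]
      rw [List.sum_append]
      have hb := hB2 (k - A.length) (by omega)
        (by rw [List.length_append] at hk2; omega)
      omega

theorem isWalkTo_append_single {a d : ℤ} {A : List ℤ} (hA : IsWalkTo a A)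
    (hd0 : d ≠ 0) (hd1 : d ≤ 1) (h1 : 1 ≤ a + d) : IsWalkTo (a + d) (A ++ [d]) := by
  obtain ⟨hA1, hA2, hA3⟩ := hA
  refine ⟨?_, ?_, by simp [hA3]⟩
  · intro e he
    rcases List.mem_append.1 he with h | h
    · exact hA1 e h
    · simp at h; subst h; exact ⟨hd0, hd1⟩
  · intro k hk1 hk2
    simp only [List.length_append, List.length_singleton] at hk2
    rcases le_or_gt k A.length with h | h
    · rw [List.take_append_of_le_length h]
      exact hA2 k hk1 h
    · have hk : k = A.length + 1 := by omega
      have : List.take k (A ++ [d]) = A ++ [d] := by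
        apply List.take_of_length_le
        simp [hk]
      rw [this, List.sum_append]
      simpa [hA3] using h1

theorem isWalkTo_unappend {s d : ℤ} {A : List ℤ} (h : IsWalkTo s (A ++ [d])) :
    IsWalkTo (s - d) A := by
  obtain ⟨h1, h2, h3⟩ := h
  refine ⟨fun e he => h1 e (List.mem_append.2 (Or.inl he)), ?_, ?_⟩
  · intro k hk1 hk2
    have := h2 k hk1 (by simp; omega)
    rwa [List.take_append_of_le_length hk2] at this
  · rw [List.sum_append] at h3; simp at h3; omega

theorem take_take_sum (D : List ℤ) (i k : ℕ) :
    (D.take (i + k)).sum = (D.take i).sum + ((D.drop i).take k).sum := by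
  rw [List.take_add, List.sum_append]

/-- prefix of a walk is a walk, given sum and later-sums facts -/
theorem walk_split_prefix {s j : ℤ} {D : List ℤ} (hD : IsWalkTo s D) {i : ℕ}
    (hsi : (D.take i).sum = j) : IsWalkTo j (D.take i) := by
  obtain ⟨h1, h2, _⟩ := hD
  refine ⟨fun e he => h1 e (List.mem_of_mem_take he), ?_, hsi⟩
  intro k hk1 hk2
  rw [List.length_take] at hk2
  rw [List.take_take, Nat.min_eq_left (by omega)]
  exact h2 k hk1 (by omega)

theorem walk_split_suffix {s j : ℤ} {D : List ℤ} (hD : IsWalkTo s D) {i : ℕ}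
    (hi : i ≤ D.length) (hsi : (D.take i).sum = j)
    (hgt : ∀ k, i < k → k ≤ D.length → j + 1 ≤ (D.take k).sum) :
    IsWalkTo (s - j) (D.drop i) := by
  obtain ⟨h1, h2, h3⟩ := hD
  refine ⟨fun e he => h1 e (List.mem_of_mem_drop he), ?_, ?_⟩
  · intro k hk1 hk2
    rw [List.length_drop] at hk2
    have := hgt (i + k) (by omega) (by omega)
    rw [take_take_sum, hsi] at this
    omega
  · have := List.sum_take_add_sum_drop D i
    rw [hsi] at this
    omega

def splitIdx (j : ℤ) (D : List ℤ) : ℕ :=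
  Nat.findGreatest (fun i => (D.take i).sum ≤ j) D.length

theorem splitIdx_le (j : ℤ) (D : List ℤ) : splitIdx j D ≤ D.length :=
  Nat.findGreatest_le _

theorem splitIdx_gt {j : ℤ} (hj : 0 ≤ j) {D : List ℤ} (hD : IsWalkTo (j + 1) D) :
    ∀ k, splitIdx j D < k → k ≤ D.length → j + 1 ≤ (D.take k).sum := by
  intro k hk1 hk2
  have := Nat.findGreatest_is_greatest (P := fun i => (D.take i).sum ≤ j) hk1 hk2
  omega

theorem splitIdx_sum {j : ℤ} (hj : 0 ≤ j) {D : List ℤ} (hD : IsWalkTo (j + 1) D) :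
    (D.take (splitIdx j D)).sum = j := by
  have hspec : (D.take (splitIdx j D)).sum ≤ j :=
    Nat.findGreatest_spec (P := fun i => (D.take i).sum ≤ j) (n := D.length) (m := 0)
      (Nat.zero_le _) (show (D.take 0).sum ≤ j by simpa using hj)
  have hle := splitIdx_le j D
  have hne : splitIdx j D ≠ D.length := by
    intro h
    rw [h, List.take_length, hD.2.2] at hspec
    omega
  have hnext := splitIdx_gt hj hD (splitIdx j D + 1) (by omega) (by omega)
  have hstep : (D.take (splitIdx j D + 1)).sum ≤ (D.take (splitIdx j D)).sum + 1 := by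
    rw [take_take_sum]
    have : ((D.drop (splitIdx j D)).take 1).sum ≤ (1 : ℤ) :=
      take_sum_le _ (fun d hd => (hD.1 d (List.mem_of_mem_drop hd)).2) 1
    omega
  omega

theorem splitIdx_concat {j : ℤ} {A B : List ℤ} (hA : A.sum = j)
    (hrel : ∀ k, 1 ≤ k → k ≤ B.length → 1 ≤ (B.take k).sum) :
    splitIdx j (A ++ B) = A.length := by
  have hle : A.length ≤ (A ++ B).length := by simp
  apply le_antisymm
  · by_contra h
    push_neg at h
    have hfg : ((A ++ B).take (splitIdx j (A ++ B))).sum ≤ j :=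
      Nat.findGreatest_spec (P := fun i => ((A ++ B).take i).sum ≤ j) (n := (A ++ B).length)
        (m := A.length) hle
        (show ((A ++ B).take A.length).sum ≤ j by rw [List.take_left]; omega)
    have hfgle : splitIdx j (A ++ B) ≤ (A ++ B).length := Nat.findGreatest_le _
    set i := splitIdx j (A ++ B) with hi
    have hk : i = A.length + (i - A.length) := by omega
    rw [hk, List.take_add, List.take_left, List.drop_left, List.sum_append, hA] at hfg
    have := hrel (i - A.length) (by omega) (by simp at hfgle; omega)
    omega
  · exact Nat.le_findGreatest (P := fun i => ((A ++ B).take i).sum ≤ j) hle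
      (show ((A ++ B).take A.length).sum ≤ j by rw [List.take_left]; omega)

theorem getLastD_eq_getLast {α : Type*} (a : α) (l : List α) (h : l ≠ []) :
    l.getLastD a = l.getLast h := by
  conv_lhs => rw [← List.dropLast_append_getLast h]
  rw [List.getLastD_concat]

theorem dropLast_append_getLastD {α : Type*} (a : α) {l : List α} (h : l ≠ []) :
    l.dropLast ++ [l.getLastD a] = l := by
  rw [getLastD_eq_getLast a l h]
  exact List.dropLast_append_getLast h

theorem peel {s : ℤ} {m : ℕ} {D : List ℤ} {L : List (Fin 4)} (hp : P s (m + 1) (D, L)) :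
    D.dropLast ++ [D.getLastD 0] = D
    ∧ (D.getLastD 0 ≠ 0 ∧ D.getLastD 0 ≤ 1)
    ∧ s - m ≤ D.getLastD 0
    ∧ IsWalkTo (s - D.getLastD 0) D.dropLast
    ∧ D.dropLast.length = m
    ∧ (D.getLastD 0 ≤ -2 →
        L ≠ [] ∧ L.dropLast ++ [L.getLastD 0] = L ∧
          L.dropLast.length = (D.dropLast.filter fun d => decide (d ≤ -2)).length)
    ∧ (¬ D.getLastD 0 ≤ -2 →
        L.length = (D.dropLast.filter fun d => decide (d ≤ -2)).length) := by
  obtain ⟨hlen, hwalk, hlab⟩ := hp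
  have hne : D ≠ [] := by
    intro h; rw [h] at hlen; simp at hlen
  have hDA : D.dropLast ++ [D.getLastD 0] = D := dropLast_append_getLastD 0 hne
  have hwalk' : IsWalkTo s (D.dropLast ++ [D.getLastD 0]) := by rwa [hDA]
  have hA : IsWalkTo (s - D.getLastD 0) D.dropLast := isWalkTo_unappend hwalk'
  have hmem : D.getLastD 0 ∈ D := by
    have h := List.mem_append_right D.dropLast (List.mem_singleton_self (D.getLastD 0))
    rwa [hDA] at h
  have hd := hwalk.1 _ hmem
  have hAlen : D.dropLast.length = m := by
    rw [List.length_dropLast]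
    have hlen' : D.length = m + 1 := hlen
    omega
  have hbd : s - m ≤ D.getLastD 0 := by
    have h1 := sum_le_length D.dropLast (fun e he => (hA.1 e he).2)
    have h2 := hA.2.2
    rw [hAlen] at h1
    omega
  have hfil : (D.filter fun d => decide (d ≤ -2)).length
      = (D.dropLast.filter fun d => decide (d ≤ -2)).length
        + ((([D.getLastD 0]).filter fun d => decide (d ≤ -2)).length) := by
    conv_lhs => rw [← hDA]
    rw [List.filter_append, List.length_append]
  refine ⟨hDA, hd, hbd, hA, hAlen, ?_, ?_⟩
  · intro hsm
    have : (([D.getLastD 0]).filter fun d => decide (d ≤ -2)) = [D.getLastD 0] := by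
      rw [List.filter_singleton, decide_eq_true hsm]
      rfl
    rw [this] at hfil
    simp only [List.length_singleton] at hfil
    have hLne : L ≠ [] := by
      intro h; rw [h] at hlab; simp at hlab; omega
    refine ⟨hLne, dropLast_append_getLastD 0 hLne, ?_⟩
    rw [List.length_dropLast]
    have hlab' : L.length = (List.filter (fun d => decide (d ≤ -2)) D).length := hlab
    rw [hlab', hfil]
    omega
  · intro hsm
    have : (([D.getLastD 0]).filter fun d => decide (d ≤ -2)) = [] := by
      rw [List.filter_singleton, decide_eq_false hsm]
      rfl
    rw [this] at hfil
    simp only [List.length_nil, Nat.add_zero] at hfil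
    have hlab' : L.length = (List.filter (fun d => decide (d ≤ -2)) D).length := hlab
    rw [hlab', hfil]

theorem finite_walks (m : ℕ) : ∀ s : ℤ, {p : List ℤ × List (Fin 4) | P s m p}.Finite := by
  induction m with
  | zero =>
    intro s
    apply Set.Finite.subset (Set.finite_singleton (([] : List ℤ), ([] : List (Fin 4))))
    rintro ⟨D, L⟩ hp
    obtain ⟨h1, _, h3⟩ := hp
    have hD : D = [] := List.length_eq_zero_iff.1 h1
    subst hD
    simp only [List.filter_nil, List.length_nil] at h3
    have hL : L = [] := List.length_eq_zero_iff.1 h3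
    subst hL
    rfl
  | succ m ih =>
    intro s
    have hT : ((Set.Icc (s - (m : ℤ)) 1) ×ˢ
        ((⋃ d ∈ Set.Icc (s - (m : ℤ)) 1, {p : List ℤ × List (Fin 4) | P (s - d) m p}) ×ˢ
          (Set.univ : Set (Option (Fin 4))))).Finite :=
      (Set.finite_Icc _ _).prod
        (((Set.finite_Icc _ _).biUnion (fun d _ => ih (s - d))).prod Set.finite_univ)
    apply Set.Finite.subset (hT.image
      (fun q => (q.2.1.1 ++ [q.1], q.2.1.2 ++ q.2.2.toList)))
    rintro ⟨D, L⟩ hp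
    obtain ⟨hDA, ⟨hd0, hd1⟩, hbd, hwalk, hlen, hsmall, hnot⟩ := peel hp
    by_cases hsm : D.getLastD 0 ≤ -2
    · obtain ⟨hLne, hLA, hLlen⟩ := hsmall hsm
      refine ⟨(D.getLastD 0, ((D.dropLast, L.dropLast), some (L.getLastD 0))), ?_, ?_⟩
      · refine ⟨⟨hbd, hd1⟩, ⟨?_, trivial⟩⟩
        exact Set.mem_biUnion (Set.mem_Icc.2 ⟨hbd, hd1⟩) ⟨hlen, hwalk, hLlen⟩
      · show (D.dropLast ++ [D.getLastD 0], L.dropLast ++ [L.getLastD 0]) = (D, L)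
        rw [hDA, hLA]
    · have hLlen := hnot hsm
      refine ⟨(D.getLastD 0, ((D.dropLast, L), none)), ?_, ?_⟩
      · refine ⟨⟨hbd, hd1⟩, ⟨?_, trivial⟩⟩
        exact Set.mem_biUnion (Set.mem_Icc.2 ⟨hbd, hd1⟩) ⟨hlen, hwalk, hLlen⟩
      · show (D.dropLast ++ [D.getLastD 0], L ++ []) = (D, L)
        rw [hDA, List.append_nil]

noncomputable def F (s : ℤ) (m : ℕ) : Finset (List ℤ × List (Fin 4)) :=
  (finite_walks m s).toFinset

theorem mem_F {s : ℤ} {m : ℕ} {p : List ℤ × List (Fin 4)} : p ∈ F s m ↔ P s m p :=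
  Set.Finite.mem_toFinset _

noncomputable def w (s : ℤ) (m : ℕ) : ℕ := (F s m).card

theorem F_empty {s : ℤ} {m : ℕ} (h : (m : ℤ) < s) : F s m = ∅ := by
  rw [Finset.eq_empty_iff_forall_notMem]
  rintro ⟨D, L⟩ hp
  obtain ⟨h1, h2, _⟩ := mem_F.1 hp
  have := h2.sum_le
  rw [h1] at this
  omega

theorem w_zero {s : ℤ} {m : ℕ} (h : (m : ℤ) < s) : w s m = 0 := by
  rw [w, F_empty h, Finset.card_empty]

theorem F_one_one : F 1 1 = {([(1 : ℤ)], ([] : List (Fin 4)))} := by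
  ext ⟨D, L⟩
  rw [mem_F, Finset.mem_singleton]
  constructor
  · rintro ⟨h1, h2, h3⟩
    obtain ⟨d, hD⟩ := List.length_eq_one_iff.1 h1
    subst hD
    have hd : d = 1 := by simpa using h2.2.2
    subst hd
    have hf : (List.filter (fun d => decide (d ≤ -2)) [(1 : ℤ)]).length = 0 := by decide
    have : L = [] := by
      apply List.length_eq_zero_iff.1
      simp only at h3
      rw [h3]
      exact hf
    rw [this]
  · rintro h
    rw [Prod.ext_iff] at h
    obtain ⟨hD, hL⟩ := h
    simp only at hD hL
    subst hD; subst hL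
    refine ⟨rfl, ⟨?_, ?_, by simp⟩, by decide⟩
    · intro e he
      simp at he
      subst he
      exact ⟨one_ne_zero, le_rfl⟩
    · intro k hk1 hk2
      simp only [List.length_singleton] at hk2
      have : k = 1 := by omega
      subst this
      simp

theorem w_one_one : w 1 1 = 1 := by
  rw [w, F_one_one, Finset.card_singleton]

def splitFwd (j : ℤ) (p : List ℤ × List (Fin 4)) :
    Σ _ : ℕ, (List ℤ × List (Fin 4)) × (List ℤ × List (Fin 4)) :=
  ⟨splitIdx j p.1,
    ((p.1.take (splitIdx j p.1),
      p.2.take ((p.1.take (splitIdx j p.1)).filter fun d => decide (d ≤ -2)).length),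
     (p.1.drop (splitIdx j p.1),
      p.2.drop ((p.1.take (splitIdx j p.1)).filter fun d => decide (d ≤ -2)).length))⟩

def splitBwd (q : Σ _ : ℕ, (List ℤ × List (Fin 4)) × (List ℤ × List (Fin 4))) :
    List ℤ × List (Fin 4) :=
  (q.2.1.1 ++ q.2.2.1, q.2.1.2 ++ q.2.2.2)

theorem w_succ (j : ℕ) (m : ℕ) :
    w ((j : ℤ) + 1) m = ∑ i ∈ Finset.range (m + 1), w (j : ℤ) i * w 1 (m - i) := by
  have hj0 : (0 : ℤ) ≤ (j : ℤ) := Int.natCast_nonneg j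
  have hcard : (F ((j : ℤ) + 1) m).card =
      ((Finset.range (m + 1)).sigma fun i => F (j : ℤ) i ×ˢ F 1 (m - i)).card := by
    apply Finset.card_nbij' (splitFwd (j : ℤ)) splitBwd
    · -- forward membership
      rintro ⟨D, L⟩ hp
      obtain ⟨hlen, hwalk, hlab⟩ := mem_F.1 hp
      have hlen' : D.length = m := hlen
      have hlab' : L.length = (D.filter fun d => decide (d ≤ -2)).length := hlab
      set i := splitIdx (j : ℤ) D with hidef
      have hile : i ≤ m := by rw [← hlen']; exact splitIdx_le _ _
      have hsi : (D.take i).sum = (j : ℤ) := splitIdx_sum hj0 hwalk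
      have hgt := splitIdx_gt hj0 hwalk
      have hpre : IsWalkTo (j : ℤ) (D.take i) := walk_split_prefix hwalk hsi
      have hsuf : IsWalkTo 1 (D.drop i) := by
        have h := walk_split_suffix hwalk (splitIdx_le _ _) hsi hgt
        rwa [show ((j : ℤ) + 1) - (j : ℤ) = 1 by ring] at h
      set c := ((D.take i).filter fun d => decide (d ≤ -2)).length with hcdef
      have hfs : (D.filter fun d => decide (d ≤ -2)).length
          = c + ((D.drop i).filter fun d => decide (d ≤ -2)).length := by
        conv_lhs => rw [← List.take_append_drop i D]
        rw [List.filter_append, List.length_append]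
      have hcle : c ≤ L.length := by omega
      have hpmem : (D.take i, L.take c) ∈ F (j : ℤ) i := by
        apply mem_F.2
        refine ⟨show (D.take i).length = i from ?_, hpre,
          show (L.take c).length = ((D.take i).filter fun d => decide (d ≤ -2)).length from ?_⟩
        · rw [List.length_take]; omega
        · rw [List.length_take]; omega
      have hsmem : (D.drop i, L.drop c) ∈ F 1 (m - i) := by
        apply mem_F.2
        refine ⟨show (D.drop i).length = m - i from ?_, hsuf,
          show (L.drop c).length = ((D.drop i).filter fun d => decide (d ≤ -2)).length from ?_⟩
        · rw [List.length_drop]; omega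
        · rw [List.length_drop]; omega
      exact Finset.mem_sigma.2 ⟨Finset.mem_range.2 (show i < m + 1 by omega),
        Finset.mem_product.2 ⟨hpmem, hsmem⟩⟩
    · -- backward membership
      rintro ⟨i, ⟨⟨A, LA⟩, ⟨B, LB⟩⟩⟩ hq
      simp only [Finset.mem_coe, Finset.mem_sigma, Finset.mem_product] at hq
      obtain ⟨hi, hA, hB⟩ := hq
      have hi' : i ≤ m := by have := Finset.mem_range.1 hi; omega
      obtain ⟨hA1, hA2, hA3⟩ := mem_F.1 hA
      obtain ⟨hB1, hB2, hB3⟩ := mem_F.1 hB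
      have hA1' : A.length = i := hA1
      have hB1' : B.length = m - i := hB1
      have hA3' : LA.length = (A.filter fun d => decide (d ≤ -2)).length := hA3
      have hB3' : LB.length = (B.filter fun d => decide (d ≤ -2)).length := hB3
      apply mem_F.2
      refine ⟨?_, isWalkTo_append hj0 hA2 hB2, ?_⟩
      · show (A ++ B).length = m
        rw [List.length_append]; omega
      · show (LA ++ LB).length = ((A ++ B).filter fun d => decide (d ≤ -2)).length
        rw [List.length_append, List.filter_append, List.length_append, hA3', hB3']
    · -- left inverse
      rintro ⟨D, L⟩ _
      show (D.take _ ++ D.drop _, L.take _ ++ L.drop _) = (D, L)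
      rw [List.take_append_drop, List.take_append_drop]
    · -- right inverse
      rintro ⟨i, ⟨⟨A, LA⟩, ⟨B, LB⟩⟩⟩ hq
      simp only [Finset.mem_coe, Finset.mem_sigma, Finset.mem_product] at hq
      obtain ⟨hi, hA, hB⟩ := hq
      obtain ⟨hA1, hA2, hA3⟩ := mem_F.1 hA
      obtain ⟨hB1, hB2, hB3⟩ := mem_F.1 hB
      have hA1' : A.length = i := hA1
      have hA3' : LA.length = (A.filter fun d => decide (d ≤ -2)).length := hA3
      subst hA1'
      have hsplit : splitIdx (j : ℤ) (A ++ B) = A.length :=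
        splitIdx_concat hA2.2.2 hB2.2.1
      simp only [splitFwd, splitBwd, hsplit, List.take_left, List.drop_left, ← hA3',
        List.take_left, List.drop_left]
  rw [w, hcard, Finset.card_sigma]
  apply Finset.sum_congr rfl
  intro i _
  rw [Finset.card_product]
  rfl

def peelFwd (p : List ℤ × List (Fin 4)) :
    (List ℤ × List (Fin 4)) ⊕ (Σ _ : ℕ, Fin 4 × (List ℤ × List (Fin 4))) :=
  if p.1.getLastD 0 = -1 then Sum.inl (p.1.dropLast, p.2)
  else Sum.inr ⟨(1 - p.1.getLastD 0).toNat, (p.2.getLastD 0, (p.1.dropLast, p.2.dropLast))⟩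

def peelBwd (q : (List ℤ × List (Fin 4)) ⊕ (Σ _ : ℕ, Fin 4 × (List ℤ × List (Fin 4)))) :
    List ℤ × List (Fin 4) :=
  match q with
  | Sum.inl (A, L) => (A ++ [-1], L)
  | Sum.inr ⟨jj, (lab, (A, L))⟩ => (A ++ [1 - (jj : ℤ)], L ++ [lab])

theorem w_peel (m : ℕ) (hm : 1 ≤ m) :
    w 1 (m + 1) = w 2 m + 4 * ∑ jj ∈ Finset.Icc 3 m, w (jj : ℤ) m := by
  have hcard : (F 1 (m + 1)).card =
      ((F 2 m).disjSum ((Finset.Icc 3 m).sigma fun jj =>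
        (Finset.univ : Finset (Fin 4)) ×ˢ F (jj : ℤ) m)).card := by
    apply Finset.card_nbij' peelFwd peelBwd
    · -- forward membership
      rintro ⟨D, L⟩ hp
      obtain ⟨hDA, ⟨hd0, hd1⟩, hbd, hwalk, hAlen, hsmall, hnot⟩ := peel (mem_F.1 hp)
      have hApos : D.dropLast ≠ [] := by
        intro h
        rw [h] at hAlen
        simp at hAlen
        omega
      have hdle : D.getLastD 0 ≤ 0 := by
        have := hwalk.pos hApos
        omega
      have hdm : 1 - D.getLastD 0 ≤ (m : ℤ) := by omega
      by_cases hc : D.getLastD 0 = -1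
      · have heq : peelFwd (D, L) = Sum.inl (D.dropLast, L) := by
          simp only [peelFwd]
          rw [if_pos hc]
        rw [heq, Finset.mem_coe, Finset.inl_mem_disjSum]
        apply mem_F.2
        refine ⟨hAlen, ?_, hnot (by rw [hc]; norm_num)⟩
        rw [hc] at hwalk
        norm_num at hwalk
        exact hwalk
      · have hdsm : D.getLastD 0 ≤ -2 := by omega
        obtain ⟨hLne, hLA, hLdl⟩ := hsmall hdsm
        have heq : peelFwd (D, L) = Sum.inr
            ⟨(1 - D.getLastD 0).toNat, (L.getLastD 0, (D.dropLast, L.dropLast))⟩ := by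
          simp only [peelFwd]
          rw [if_neg hc]
        rw [heq, Finset.mem_coe, Finset.inr_mem_disjSum]
        refine Finset.mem_sigma.2 ⟨Finset.mem_Icc.2 ⟨?_, ?_⟩,
          Finset.mem_product.2 ⟨Finset.mem_univ _, ?_⟩⟩
        · show 3 ≤ (1 - D.getLastD 0).toNat
          omega
        · show (1 - D.getLastD 0).toNat ≤ m
          omega
        · apply mem_F.2
          refine ⟨hAlen, ?_, hLdl⟩
          show IsWalkTo (((1 - D.getLastD 0).toNat : ℕ) : ℤ) D.dropLast
          have hcast : ((1 - D.getLastD 0).toNat : ℤ) = 1 - D.getLastD 0 :=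
            Int.toNat_of_nonneg (by omega)
          rw [hcast]
          exact hwalk
    · -- backward membership
      rintro (⟨A, L⟩ | ⟨jj, lab, A, L⟩) hq
      · rw [Finset.mem_coe, Finset.inl_mem_disjSum] at hq
        obtain ⟨h1, h2, h3⟩ := mem_F.1 hq
        have h1' : A.length = m := h1
        have h3' : L.length = (A.filter fun d => decide (d ≤ -2)).length := h3
        show (A ++ [(-1 : ℤ)], L) ∈ F 1 (m + 1)
        apply mem_F.2
        have hw := isWalkTo_append_single h2 (by norm_num) (by norm_num)
          (show (1 : ℤ) ≤ 2 + (-1) by norm_num)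
        rw [show (2 : ℤ) + (-1) = 1 by norm_num] at hw
        refine ⟨by rw [List.length_append]; simp [h1'], hw, ?_⟩
        have hfil : List.filter (fun d => decide (d ≤ -2)) [(-1 : ℤ)] = [] := by decide
        rw [List.filter_append, hfil, List.append_nil, h3']
      · rw [Finset.mem_coe, Finset.inr_mem_disjSum] at hq
        simp only [Finset.mem_sigma, Finset.mem_product] at hq
        obtain ⟨hjj, _, hAL⟩ := hq
        rw [Finset.mem_Icc] at hjj
        obtain ⟨h1, h2, h3⟩ := mem_F.1 hAL
        have h1' : A.length = m := h1
        have h3' : L.length = (A.filter fun d => decide (d ≤ -2)).length := h3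
        show (A ++ [1 - (jj : ℤ)], L ++ [lab]) ∈ F 1 (m + 1)
        apply mem_F.2
        have hd2 : (1 : ℤ) - (jj : ℤ) ≤ -2 := by
          have : (3 : ℤ) ≤ (jj : ℤ) := by exact_mod_cast hjj.1
          omega
        have hw := isWalkTo_append_single h2 (show (1 : ℤ) - (jj : ℤ) ≠ 0 by omega)
          (by omega) (show (1 : ℤ) ≤ (jj : ℤ) + (1 - (jj : ℤ)) by omega)
        rw [show (jj : ℤ) + (1 - (jj : ℤ)) = 1 by ring] at hw
        refine ⟨by rw [List.length_append]; simp [h1'], hw, ?_⟩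
        have hfil : List.filter (fun d => decide (d ≤ -2)) [1 - (jj : ℤ)]
            = [1 - (jj : ℤ)] := by
          rw [List.filter_singleton, decide_eq_true hd2]
          rfl
        rw [List.filter_append, hfil, List.length_append, List.length_append, h3']
        rfl
    · -- left inverse
      rintro ⟨D, L⟩ hp
      obtain ⟨hDA, ⟨hd0, hd1⟩, hbd, hwalk, hAlen, hsmall, hnot⟩ := peel (mem_F.1 hp)
      have hApos : D.dropLast ≠ [] := by
        intro h
        rw [h] at hAlen
        simp at hAlen
        omega
      have hdle : D.getLastD 0 ≤ 0 := by
        have := hwalk.pos hApos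
        omega
      by_cases hc : D.getLastD 0 = -1
      · have heq : peelFwd (D, L) = Sum.inl (D.dropLast, L) := by
          simp only [peelFwd]
          rw [if_pos hc]
        rw [heq]
        show (D.dropLast ++ [(-1 : ℤ)], L) = (D, L)
        rw [← hc, hDA]
      · have hdsm : D.getLastD 0 ≤ -2 := by omega
        obtain ⟨hLne, hLA, hLdl⟩ := hsmall hdsm
        have heq : peelFwd (D, L) = Sum.inr
            ⟨(1 - D.getLastD 0).toNat, (L.getLastD 0, (D.dropLast, L.dropLast))⟩ := by
          simp only [peelFwd]
          rw [if_neg hc]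
        rw [heq]
        show (D.dropLast ++ [1 - ((1 - D.getLastD 0).toNat : ℤ)],
          L.dropLast ++ [L.getLastD 0]) = (D, L)
        have hcast : ((1 - D.getLastD 0).toNat : ℤ) = 1 - D.getLastD 0 :=
          Int.toNat_of_nonneg (by omega)
        rw [hcast, show (1 : ℤ) - (1 - D.getLastD 0) = D.getLastD 0 by ring, hDA, hLA]
    · -- right inverse
      rintro (⟨A, L⟩ | ⟨jj, lab, A, L⟩) hq
      · have hlast : (A ++ [(-1 : ℤ)]).getLastD 0 = -1 := List.getLastD_concat
        show peelFwd (A ++ [(-1 : ℤ)], L) = Sum.inl (A, L)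
        simp only [peelFwd]
        rw [if_pos hlast, List.dropLast_concat]
      · rw [Finset.mem_coe, Finset.inr_mem_disjSum] at hq
        simp only [Finset.mem_sigma, Finset.mem_product] at hq
        obtain ⟨hjj, _, _⟩ := hq
        rw [Finset.mem_Icc] at hjj
        have hjj3 : (3 : ℤ) ≤ (jj : ℤ) := by exact_mod_cast hjj.1
        have hlast : (A ++ [1 - (jj : ℤ)]).getLastD 0 = 1 - (jj : ℤ) :=
          List.getLastD_concat
        show peelFwd (A ++ [1 - (jj : ℤ)], L ++ [lab]) = Sum.inr ⟨jj, (lab, (A, L))⟩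
        simp only [peelFwd]
        rw [hlast, if_neg (show ¬((1 : ℤ) - (jj : ℤ) = -1) by omega)]
        rw [show (1 : ℤ) - (1 - (jj : ℤ)) = (jj : ℤ) by ring, Int.toNat_natCast,
          List.dropLast_concat, List.getLastD_concat, List.dropLast_concat]
  rw [w, hcard, Finset.card_disjSum, Finset.card_sigma]
  congr 1
  rw [Finset.mul_sum]
  apply Finset.sum_congr rfl
  intro jj _
  rw [Finset.card_product, Finset.card_univ, Fintype.card_fin]
  rfl

theorem u_rec (m : ℕ) : (∑ jj ∈ Finset.Icc 3 m, w (jj : ℤ) m)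
    = w 3 m + ∑ k ∈ Finset.range (m + 1),
        (∑ jj ∈ Finset.Icc 3 k, w (jj : ℤ) k) * w 1 (m - k) := by
  have hs1 : ∀ k ∈ Finset.range (m + 1),
      (∑ jj ∈ Finset.Icc 3 k, w (jj : ℤ) k) * w 1 (m - k)
        = ∑ jj ∈ Finset.Icc 3 m, w (jj : ℤ) k * w 1 (m - k) := by
    intro k hk
    have hk' : k ≤ m := by have := Finset.mem_range.1 hk; omega
    rw [Finset.sum_subset (Finset.Icc_subset_Icc_right hk')
      (fun x hx hnx => ?_), Finset.sum_mul]
    apply w_zero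
    rw [Finset.mem_Icc] at hx
    have : k < x := by
      by_contra hcon
      exact hnx (Finset.mem_Icc.2 ⟨hx.1, by omega⟩)
    exact_mod_cast this
  rw [Finset.sum_congr rfl hs1, Finset.sum_comm]
  have hs2 : ∀ jj ∈ Finset.Icc 3 m,
      (∑ k ∈ Finset.range (m + 1), w (jj : ℤ) k * w 1 (m - k)) = w ((jj : ℤ) + 1) m :=
    fun jj _ => (w_succ jj m).symm
  rw [Finset.sum_congr rfl hs2]
  -- reindex jj+1
  have hre : (∑ jj ∈ Finset.Icc 3 m, w ((jj : ℤ) + 1) m)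
      = ∑ ii ∈ Finset.Icc 4 (m + 1), w (ii : ℤ) m := by
    rw [show (4 : ℕ) = 3 + 1 from rfl, show m + 1 = m + 1 from rfl,
      ← Finset.map_add_right_Icc 3 m 1, Finset.sum_map]
    apply Finset.sum_congr rfl
    intro jj _
    have : ((addRightEmbedding 1) jj : ℕ) = jj + 1 := rfl
    rw [this]
    push_cast
    ring_nf
  rw [hre]
  have htr : (∑ ii ∈ Finset.Icc 4 (m + 1), w (ii : ℤ) m)
      = ∑ ii ∈ Finset.Icc 4 m, w (ii : ℤ) m := by
    rw [← Finset.sum_subset (Finset.Icc_subset_Icc_right (by omega : m ≤ m + 1))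
      (fun x hx hnx => ?_)]
    apply w_zero
    rw [Finset.mem_Icc] at hx
    have : m < x := by
      by_contra hcon
      exact hnx (Finset.mem_Icc.2 ⟨hx.1, by omega⟩)
    exact_mod_cast this
  rw [htr]
  by_cases hm3 : 3 ≤ m
  · rw [Finset.Icc_eq_cons_Ioc hm3, Finset.sum_cons, ← Finset.Icc_add_one_left_eq_Ioc]
    rfl
  · have h1 : Finset.Icc 3 m = (∅ : Finset ℕ) := Finset.Icc_eq_empty (by omega)
    have h2 : Finset.Icc 4 m = (∅ : Finset ℕ) := Finset.Icc_eq_empty (by omega)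
    rw [h1, h2]
    simp [w_zero (show (m : ℤ) < 3 by exact_mod_cast (by omega : m < 3))]


theorem Tt_eq (m : ℕ) : Tt m = w 1 m := by
  have h : Tt m = Nat.card {p : List ℤ × List (Fin 4) // p ∈ F 1 m} :=
    Nat.card_congr (Equiv.subtypeEquivRight (fun p => by
      rw [mem_F]
      exact Iff.rfl))
  rw [h, Nat.card_eq_finsetCard]
  rfl

noncomputable def tw (j : ℕ) : PowerSeries ℤ :=
  PowerSeries.mk fun m => ((w (j : ℤ) m : ℕ) : ℤ)

noncomputable def u : PowerSeries ℤ :=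
  PowerSeries.mk fun m => ((∑ jj ∈ Finset.Icc 3 m, w (jj : ℤ) m : ℕ) : ℤ)

theorem t_eq : t = tw 1 := by
  apply PowerSeries.ext
  intro m
  unfold t tw
  rw [PowerSeries.coeff_mk, PowerSeries.coeff_mk]
  by_cases h : m = 0
  · subst h
    rw [if_pos rfl, w_zero (by norm_num)]
    norm_num
  · rw [if_neg h, Tt_eq]
    norm_num

theorem tw_succ (j : ℕ) : tw (j + 1) = tw j * tw 1 := by
  apply PowerSeries.ext
  intro m
  rw [PowerSeries.coeff_mul, Finset.Nat.sum_antidiagonal_eq_sum_range_succ_mk]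
  unfold tw
  simp only [PowerSeries.coeff_mk]
  rw [show ((j + 1 : ℕ) : ℤ) = (j : ℤ) + 1 by push_cast; ring, w_succ]
  push_cast
  rfl

theorem tw_pow (j : ℕ) (hj : 1 ≤ j) : tw j = t ^ j := by
  induction j, hj using Nat.le_induction with
  | base => rw [pow_one, t_eq]
  | succ n hn ih => rw [tw_succ, ih, ← t_eq, pow_succ]

theorem coeff_t (n : ℕ) : (PowerSeries.coeff n) t = ((w 1 n : ℕ) : ℤ) := by
  rw [t_eq]
  unfold tw
  rw [PowerSeries.coeff_mk]
  norm_num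

theorem coeff_u (n : ℕ) : (PowerSeries.coeff n) u
    = ((∑ jj ∈ Finset.Icc 3 n, w (jj : ℤ) n : ℕ) : ℤ) := by
  unfold u
  rw [PowerSeries.coeff_mk]

theorem coeff_t2 (n : ℕ) : (PowerSeries.coeff n) (t ^ 2) = ((w 2 n : ℕ) : ℤ) := by
  rw [← tw_pow 2 (by norm_num)]
  unfold tw
  rw [PowerSeries.coeff_mk]
  norm_num

theorem coeff_t3 (n : ℕ) : (PowerSeries.coeff n) (t ^ 3) = ((w 3 n : ℕ) : ℤ) := by
  rw [← tw_pow 3 (by norm_num)]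
  unfold tw
  rw [PowerSeries.coeff_mk]
  norm_num

theorem u_eq : u = t ^ 3 + u * t := by
  apply PowerSeries.ext
  intro m
  rw [map_add, PowerSeries.coeff_mul, Finset.Nat.sum_antidiagonal_eq_sum_range_succ_mk]
  have hsum : ∀ k ∈ Finset.range (m + 1),
      (PowerSeries.coeff k) u * (PowerSeries.coeff (m - k)) t
        = ((∑ jj ∈ Finset.Icc 3 k, w (jj : ℤ) k : ℕ) : ℤ) * ((w 1 (m - k) : ℕ) : ℤ) :=
    fun k _ => by rw [coeff_u k, coeff_t (m - k)]
  rw [coeff_u, coeff_t3, Finset.sum_congr rfl hsum]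
  push_cast
  exact_mod_cast u_rec m

theorem t_structure :
    t = PowerSeries.X + PowerSeries.X * t ^ 2 + 4 * (PowerSeries.X * u) := by
  apply PowerSeries.ext
  intro m
  rw [map_add, map_add]
  rw [show (4 : PowerSeries ℤ) * (PowerSeries.X * u)
      = PowerSeries.X * (PowerSeries.C 4 * u) from by
    rw [show (4 : PowerSeries ℤ) = PowerSeries.C 4 from (map_ofNat _ _).symm]; ring]
  cases m with
  | zero =>
    rw [coeff_t 0, w_zero (by norm_num)]
    simp [PowerSeries.coeff_zero_eq_constantCoeff, map_mul]
  | succ n =>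
    rw [coeff_t, PowerSeries.coeff_succ_X_mul, PowerSeries.coeff_succ_X_mul,
      PowerSeries.coeff_X, PowerSeries.coeff_C_mul, coeff_u, coeff_t2]
    cases n with
    | zero =>
      rw [w_one_one, if_pos rfl, w_zero (show ((0 : ℕ) : ℤ) < 2 by norm_num)]
      norm_num
    | succ k =>
      rw [if_neg (by omega)]
      have hp := w_peel (k + 1) (by omega)
      push_cast [hp]
      ring

end TSW

/-- The generating function `t = Σ_{m ≥ 1} T̃_m z^m` of typed-search-walk
counts satisfies `3z·t³ + (1+z)·t² − (1+z)·t + z = 0`. -/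
theorem typedSearchWalk_gf_equation :
    3 * PowerSeries.X * t ^ 3 + (1 + PowerSeries.X) * t ^ 2
      - (1 + PowerSeries.X) * t + PowerSeries.X = 0 := by
  have h1 : TSW.u * (1 - t) = t ^ 3 := by linear_combination TSW.u_eq
  have h2 := TSW.t_structure
  linear_combination (t - 1) * h2 - 4 * PowerSeries.X * h1
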